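/- arXiv:1506.01329 — 4 statements merged into one kernel-verified Lean document; each statement's English description precedes it below -/
import Mathlib

section
/- Let ψ be the Lévy characteristic with drift b, diffusion σ², Poisson intensity λ and jump measure r. If (f_j) is a sequence of real-valued Schwartz functions on ℝ^d converging to a real-valued Schwartz function f in the topology of the Schwartz space (i.e., all Schwartz seminorms of f_j − f tend to 0), then ∫_{ℝ^d} ψ(f_j(x)) dx → ∫_{ℝ^d} ψ(f(x)) dx. In particular, the characteristic functional C_η(f) = exp(∫_{ℝ^d} ψ(f(x)) dx) is sequentially continuous on the real Schwartz space. -/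
open MeasureTheory Filter Topology

/-- The Lévy characteristic with drift `b`, diffusion `σ2`, Poisson intensity `lam`
and jump measure `r`. -/
noncomputable def levyChar (b σ2 lam : ℝ) (r : Measure ℝ) (t : ℝ) : ℂ :=
  Complex.I * (b : ℂ) * (t : ℂ) - ((σ2 / 2 : ℝ) : ℂ) * (t : ℂ) ^ 2
    + (lam : ℂ) * ∫ s : ℝ, (Complex.exp (Complex.I * (s : ℂ) * (t : ℂ)) - 1) ∂r

lemma exp_I_lip (a c : ℝ) :
    ‖Complex.exp (Complex.I * a) - Complex.exp (Complex.I * c)‖ ≤ |a - c| := by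
  have hd : ∀ t : ℝ, HasDerivAt (fun s : ℝ => Complex.exp (Complex.I * s))
      (Complex.I * Complex.exp (Complex.I * t)) t := by
    intro t
    have h1 : HasDerivAt (fun s : ℝ => (Complex.I * s : ℂ)) Complex.I t := by
      simpa using (Complex.ofRealCLM.hasDerivAt (x := t)).const_mul Complex.I
    simpa [mul_comm] using h1.cexp
  have hlip : LipschitzWith 1 (fun s : ℝ => Complex.exp (Complex.I * s)) := by
    apply lipschitzWith_of_nnnorm_deriv_le (fun x => (hd x).differentiableAt)
    intro x
    rw [(hd x).deriv]
    simp [← NNReal.coe_le_coe, Complex.norm_exp]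
  have := hlip.dist_le_mul a c
  simpa [dist_eq_norm, Real.dist_eq] using this

section Jump
variable (r : Measure ℝ) [IsProbabilityMeasure r]

lemma jump_integrable (t : ℝ) :
    Integrable (fun s : ℝ => Complex.exp (Complex.I * s * t) - 1) r := by
  have hc : Continuous (fun s : ℝ => Complex.exp (Complex.I * s * t) - 1) := by
    fun_prop
  refine (integrable_const (2 : ℝ)).mono' hc.aestronglyMeasurable ?_
  filter_upwards with s
  calc ‖Complex.exp (Complex.I * s * t) - 1‖
      ≤ ‖Complex.exp (Complex.I * s * t)‖ + ‖(1:ℂ)‖ := norm_sub_le _ _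
    _ ≤ 2 := by
        rw [Complex.norm_exp]
        simp
        norm_num [Complex.mul_re]

lemma jump_diff (hmom : ∀ n : ℕ, Integrable (fun s : ℝ => |s| ^ n) r) (t u : ℝ) :
    ‖(∫ s : ℝ, (Complex.exp (Complex.I * s * t) - 1) ∂r)
      - ∫ s : ℝ, (Complex.exp (Complex.I * s * u) - 1) ∂r‖
      ≤ (∫ s : ℝ, |s| ∂r) * |t - u| := by
  rw [← integral_sub (jump_integrable r t) (jump_integrable r u)]
  have key : ∀ s : ℝ, ‖(Complex.exp (Complex.I * s * t) - 1)
      - (Complex.exp (Complex.I * s * u) - 1)‖ ≤ |s| * |t - u| := by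
    intro s
    have := exp_I_lip (s * t) (s * u)
    have h2 : (Complex.I * s * t : ℂ) = Complex.I * ((s * t : ℝ) : ℂ) := by
      push_cast; ring
    have h3 : (Complex.I * s * u : ℂ) = Complex.I * ((s * u : ℝ) : ℂ) := by
      push_cast; ring
    calc ‖(Complex.exp (Complex.I * s * t) - 1)
        - (Complex.exp (Complex.I * s * u) - 1)‖
        = ‖Complex.exp (Complex.I * ((s*t:ℝ):ℂ)) - Complex.exp (Complex.I * ((s*u:ℝ):ℂ))‖ := by
          rw [← h2, ← h3]; ring_nf
      _ ≤ |s * t - s * u| := this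
      _ = |s| * |t - u| := by rw [← mul_sub, abs_mul]
  calc ‖∫ s : ℝ, ((Complex.exp (Complex.I * s * t) - 1)
        - (Complex.exp (Complex.I * s * u) - 1)) ∂r‖
      ≤ ∫ s : ℝ, ‖(Complex.exp (Complex.I * s * t) - 1)
        - (Complex.exp (Complex.I * s * u) - 1)‖ ∂r := norm_integral_le_integral_norm _
    _ ≤ ∫ s : ℝ, |s| * |t - u| ∂r := by
        refine integral_mono ((jump_integrable r t).sub (jump_integrable r u)).norm
          (Integrable.mul_const (by simpa using hmom 1) _) key
    _ = (∫ s : ℝ, |s| ∂r) * |t - u| := by rw [integral_mul_const]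

end Jump

section LC
variable (b σ2 lam : ℝ) (hσ : 0 ≤ σ2) (hlam : 0 ≤ lam)
  (r : Measure ℝ) [IsProbabilityMeasure r]

lemma levyChar_diff (hσ : 0 ≤ σ2) (hlam : 0 ≤ lam)
    (hmom : ∀ n : ℕ, Integrable (fun s : ℝ => |s| ^ n) r) (t u : ℝ) :
    ‖levyChar b σ2 lam r t - levyChar b σ2 lam r u‖
      ≤ (|b| + lam * ∫ s : ℝ, |s| ∂r) * |t - u|
        + σ2 / 2 * (|t| + |u|) * |t - u| := by
  set Jt := ∫ s : ℝ, (Complex.exp (Complex.I * (s : ℂ) * (t : ℂ)) - 1) ∂r with hJt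
  set Ju := ∫ s : ℝ, (Complex.exp (Complex.I * (s : ℂ) * (u : ℂ)) - 1) ∂r with hJu
  have hsplit : levyChar b σ2 lam r t - levyChar b σ2 lam r u
      = Complex.I * (b:ℂ) * ((t:ℂ) - u) - ((σ2/2 : ℝ):ℂ) * ((t:ℂ)^2 - (u:ℂ)^2)
        + (lam:ℂ) * (Jt - Ju) := by
    simp only [levyChar]; ring
  rw [hsplit]
  have h1 : ‖Complex.I * (b:ℂ) * ((t:ℂ) - u)‖ = |b| * |t - u| := by
    rw [show ((t:ℂ) - u) = ((t - u : ℝ) : ℂ) by push_cast; ring]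
    rw [norm_mul, norm_mul, Complex.norm_I, Complex.norm_real, Complex.norm_real]
    simp [Real.norm_eq_abs]
  have h2 : ‖((σ2/2 : ℝ):ℂ) * ((t:ℂ)^2 - (u:ℂ)^2)‖ ≤ σ2/2 * ((|t| + |u|) * |t - u|) := by
    rw [show ((t:ℂ)^2 - (u:ℂ)^2) = (((t^2 - u^2 : ℝ)) : ℂ) by push_cast; ring]
    rw [norm_mul, Complex.norm_real, Complex.norm_real, Real.norm_eq_abs, Real.norm_eq_abs,
      abs_of_nonneg (by positivity : (0:ℝ) ≤ σ2/2)]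
    gcongr
    calc |t^2 - u^2| = |t + u| * |t - u| := by rw [← abs_mul]; ring_nf
      _ ≤ (|t| + |u|) * |t - u| := by gcongr; exact abs_add_le _ _
  have h3 : ‖(lam:ℂ) * (Jt - Ju)‖ ≤ lam * ((∫ s : ℝ, |s| ∂r) * |t - u|) := by
    rw [norm_mul, Complex.norm_real, Real.norm_eq_abs, abs_of_nonneg hlam]
    exact mul_le_mul_of_nonneg_left (jump_diff r hmom t u) hlam
  calc ‖Complex.I * (b:ℂ) * ((t:ℂ) - u) - ((σ2/2 : ℝ):ℂ) * ((t:ℂ)^2 - (u:ℂ)^2)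
        + (lam:ℂ) * (Jt - Ju)‖
      ≤ ‖Complex.I * (b:ℂ) * ((t:ℂ) - u) - ((σ2/2 : ℝ):ℂ) * ((t:ℂ)^2 - (u:ℂ)^2)‖
        + ‖(lam:ℂ) * (Jt - Ju)‖ := norm_add_le _ _
    _ ≤ ‖Complex.I * (b:ℂ) * ((t:ℂ) - u)‖ + ‖((σ2/2 : ℝ):ℂ) * ((t:ℂ)^2 - (u:ℂ)^2)‖
        + ‖(lam:ℂ) * (Jt - Ju)‖ := by gcongr; exact norm_sub_le _ _
    _ ≤ |b| * |t - u| + σ2/2 * ((|t| + |u|) * |t - u|)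
        + lam * ((∫ s : ℝ, |s| ∂r) * |t - u|) := by rw [h1]; gcongr
    _ = (|b| + lam * ∫ s : ℝ, |s| ∂r) * |t - u| + σ2 / 2 * (|t| + |u|) * |t - u| := by ring

lemma levyChar_zero : levyChar b σ2 lam r 0 = 0 := by
  simp [levyChar]

lemma levyChar_norm_le (hσ : 0 ≤ σ2) (hlam : 0 ≤ lam)
    (hmom : ∀ n : ℕ, Integrable (fun s : ℝ => |s| ^ n) r) (t : ℝ) :
    ‖levyChar b σ2 lam r t‖
      ≤ (|b| + lam * ∫ s : ℝ, |s| ∂r) * |t| + σ2 / 2 * |t| * |t| := by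
  have := levyChar_diff b σ2 lam r hσ hlam hmom t 0
  simpa [levyChar_zero] using this

lemma levyChar_continuous
    (hmom : ∀ n : ℕ, Integrable (fun s : ℝ => |s| ^ n) r) :
    Continuous (levyChar b σ2 lam r) := by
  have hJ : Continuous (fun t : ℝ =>
      ∫ s : ℝ, (Complex.exp (Complex.I * (s : ℂ) * (t : ℂ)) - 1) ∂r) := by
    have m1 : (0:ℝ) ≤ ∫ s : ℝ, |s| ∂r := integral_nonneg fun s => abs_nonneg s
    refine LipschitzWith.continuous (K := ⟨_, m1⟩)
      (LipschitzWith.of_dist_le_mul fun t u => ?_)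
    rw [dist_eq_norm, Real.dist_eq]
    exact jump_diff r hmom t u
  unfold levyChar
  fun_prop
end LC

section Main
variable {d : ℕ}

local notation "E" => EuclideanSpace ℝ (Fin d)

lemma schwartz_decay (g : SchwartzMap E ℝ) (x : E) :
    ‖g x‖ ≤ (2 ^ (d+1) *
        (Finset.Iic ((d+1 : ℕ), (0:ℕ))).sup (fun m => SchwartzMap.seminorm ℝ m.1 m.2) g)
      * (1 + ‖x‖) ^ (-(d+1:ℝ)) := by
  have h := SchwartzMap.one_add_le_sup_seminorm_apply (𝕜 := ℝ) (m := ((d+1:ℕ), (0:ℕ)))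
    (k := d+1) (n := 0) le_rfl le_rfl g x
  rw [norm_iteratedFDeriv_zero] at h
  have hpos : (0:ℝ) < (1 + ‖x‖) ^ (d+1 : ℕ) := by positivity
  have hrw : (1 + ‖x‖) ^ (-(d+1:ℝ)) = ((1 + ‖x‖) ^ (d+1 : ℕ))⁻¹ := by
    rw [← Real.rpow_natCast (1 + ‖x‖) (d+1), ← Real.rpow_neg (by positivity)]
    norm_num
  rw [hrw, ← div_eq_mul_inv, le_div_iff₀ hpos]
  linarith [h]

lemma integrable_decay (hd : 1 ≤ d) :
    Integrable (fun x : E => (1 + ‖x‖) ^ (-(d+1:ℝ))) := by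
  apply integrable_one_add_norm
  rw [finrank_euclideanSpace_fin]
  exact_mod_cast Nat.lt_succ_self d

lemma integrable_levyChar_comp (b σ2 lam : ℝ) (hσ : 0 ≤ σ2) (hlam : 0 ≤ lam)
    (r : Measure ℝ) [IsProbabilityMeasure r]
    (hmom : ∀ n : ℕ, Integrable (fun s : ℝ => |s| ^ n) r)
    (g : SchwartzMap E ℝ) :
    Integrable (fun x : E => levyChar b σ2 lam r (g x)) := by
  have hcont : Continuous (fun x : E => levyChar b σ2 lam r (g x)) :=
    (levyChar_continuous b σ2 lam r hmom).comp g.continuous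
  set K : ℝ := |b| + lam * ∫ s : ℝ, |s| ∂r + σ2/2 * SchwartzMap.seminorm ℝ 0 0 g with hK
  refine ((g.integrable.norm).const_mul K).mono' hcont.aestronglyMeasurable ?_
  filter_upwards with x
  have h1 := levyChar_norm_le b σ2 lam r hσ hlam hmom (g x)
  have h2 : |g x| ≤ SchwartzMap.seminorm ℝ 0 0 g := by
    simpa [Real.norm_eq_abs] using SchwartzMap.norm_le_seminorm ℝ g x
  calc ‖levyChar b σ2 lam r (g x)‖
      ≤ (|b| + lam * ∫ s : ℝ, |s| ∂r) * |g x| + σ2 / 2 * |g x| * |g x| := h1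
    _ ≤ (|b| + lam * ∫ s : ℝ, |s| ∂r) * |g x|
        + σ2 / 2 * (SchwartzMap.seminorm ℝ 0 0 g) * |g x| := by
        have := mul_le_mul_of_nonneg_right
          (mul_le_mul_of_nonneg_left h2 (by positivity : (0:ℝ) ≤ σ2/2)) (abs_nonneg (g x))
        linarith
    _ = K * ‖g x‖ := by rw [Real.norm_eq_abs]; ring

end Main

set_option maxHeartbeats 2000000 in
theorem charFunctional_sequentially_continuous
    (b σ2 lam : ℝ) (hσ : 0 ≤ σ2) (hlam : 0 ≤ lam)
    (r : Measure ℝ) [IsProbabilityMeasure r] (hr0 : r {0} = 0)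
    (hmom : ∀ n : ℕ, Integrable (fun s : ℝ => |s| ^ n) r)
    (d : ℕ) (hd : 1 ≤ d)
    (f : ℕ → SchwartzMap (EuclideanSpace ℝ (Fin d)) ℝ)
    (f₀ : SchwartzMap (EuclideanSpace ℝ (Fin d)) ℝ)
    (hconv : ∀ k n : ℕ,
      Tendsto (fun j => SchwartzMap.seminorm ℝ k n (f j - f₀)) atTop (𝓝 0)) :
    Tendsto (fun j => ∫ x, levyChar b σ2 lam r (f j x)) atTop
        (𝓝 (∫ x, levyChar b σ2 lam r (f₀ x))) ∧
    Tendsto (fun j => Complex.exp (∫ x, levyChar b σ2 lam r (f j x))) atTop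
        (𝓝 (Complex.exp (∫ x, levyChar b σ2 lam r (f₀ x)))) := by
  set ψ := levyChar b σ2 lam r with hψ
  set S : SchwartzMap (EuclideanSpace ℝ (Fin d)) ℝ → ℝ := fun g =>
    2 ^ (d+1) *
      (Finset.Iic ((d+1 : ℕ), (0:ℕ))).sup (fun m => SchwartzMap.seminorm ℝ m.1 m.2) g
    with hSdef
  have hS0 : ∀ g, 0 ≤ S g := fun g =>
    mul_nonneg (by positivity) (apply_nonneg _ _)
  have hdecay : ∀ (g : SchwartzMap (EuclideanSpace ℝ (Fin d)) ℝ) x,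
      ‖g x‖ ≤ S g * (1 + ‖x‖) ^ (-(d+1:ℝ)) := fun g x => schwartz_decay g x
  -- S (f j - f₀) → 0
  have hStend : Tendsto (fun j => S (f j - f₀)) atTop (𝓝 0) := by
    have hsum : Tendsto (fun j => ∑ m ∈ Finset.Iic ((d+1 : ℕ), (0:ℕ)),
        SchwartzMap.seminorm ℝ m.1 m.2 (f j - f₀)) atTop (𝓝 0) := by
      have := tendsto_finset_sum (Finset.Iic ((d+1 : ℕ), (0:ℕ)))
        (fun m _ => hconv m.1 m.2)
      simpa using this
    have hsup : Tendsto (fun j =>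
        ((Finset.Iic ((d+1 : ℕ), (0:ℕ))).sup
          (fun m => SchwartzMap.seminorm ℝ m.1 m.2)) (f j - f₀)) atTop (𝓝 0) := by
      refine squeeze_zero (fun j => apply_nonneg _ _) (fun j => ?_) hsum
      refine Seminorm.finset_sup_apply_le
        (Finset.sum_nonneg fun m _ => apply_nonneg _ _) (fun m hm => ?_)
      exact Finset.single_le_sum (f := fun m => SchwartzMap.seminorm ℝ m.1 m.2 (f j - f₀))
        (fun i _ => apply_nonneg _ _) hm
    have := hsup.const_mul ((2:ℝ) ^ (d+1))
    simpa [hSdef] using this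
  have m1 : (0:ℝ) ≤ ∫ s, |s| ∂r := integral_nonneg fun s => abs_nonneg s
  set w : EuclideanSpace ℝ (Fin d) → ℝ := fun x => (1 + ‖x‖) ^ (-(d+1:ℝ)) with hwdef
  have hwint : Integrable w := integrable_decay hd
  have hw0 : ∀ x, 0 ≤ w x := fun x => Real.rpow_nonneg (by positivity) _
  have hw1 : ∀ x, w x ≤ 1 := fun x =>
    Real.rpow_le_one_of_one_le_of_nonpos (by linarith [norm_nonneg x])
      (by push_cast; linarith)
  set A : ℝ := |b| + lam * ∫ s, |s| ∂r with hAdef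
  have hA0 : 0 ≤ A := add_nonneg (abs_nonneg b) (mul_nonneg hlam m1)
  set c : ℕ → ℝ := fun j =>
    A * S (f j - f₀) + σ2/2 * (S (f j - f₀) + 2 * S f₀) * S (f j - f₀) with hcdef
  have hkey : ∀ j, ‖(∫ x, ψ (f j x)) - ∫ x, ψ (f₀ x)‖ ≤ c j * ∫ x, w x := by
    intro j
    have hIj := integrable_levyChar_comp b σ2 lam hσ hlam r hmom (f j)
    have hI0 := integrable_levyChar_comp b σ2 lam hσ hlam r hmom f₀
    rw [← integral_sub hIj hI0]
    have hptw : ∀ x, ‖ψ (f j x) - ψ (f₀ x)‖ ≤ c j * w x := by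
      intro x
      have hdiff := levyChar_diff b σ2 lam r hσ hlam hmom (f j x) (f₀ x)
      have e1 : |f j x - f₀ x| ≤ S (f j - f₀) * w x := by
        have := hdecay (f j - f₀) x
        simpa only [SchwartzMap.sub_apply, Real.norm_eq_abs] using this
      have e0 : |f₀ x| ≤ S f₀ * w x := by
        simpa only [Real.norm_eq_abs] using hdecay f₀ x
      have ej : |f j x| ≤ S (f j - f₀) * w x + S f₀ * w x := by
        calc |f j x| = |(f j x - f₀ x) + f₀ x| := by norm_num
          _ ≤ |f j x - f₀ x| + |f₀ x| := abs_add_le _ _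
          _ ≤ _ := add_le_add e1 e0
      have hb1 : (S (f j - f₀) + 2 * S f₀) * w x ≤ S (f j - f₀) + 2 * S f₀ :=
        mul_le_of_le_one_right (by have := hS0 (f j - f₀); have := hS0 f₀; linarith)
          (hw1 x)
      have habs : |f j x| + |f₀ x| ≤ S (f j - f₀) + 2 * S f₀ := by
        have h' : |f j x| + |f₀ x| ≤ (S (f j - f₀) + 2 * S f₀) * w x := by
          have : (S (f j - f₀) + 2 * S f₀) * w x
              = S (f j - f₀) * w x + S f₀ * w x + S f₀ * w x := by ring
          rw [this]; linarith [ej, e0]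
        linarith [hb1]
      have t1 : A * |f j x - f₀ x| ≤ A * (S (f j - f₀) * w x) :=
        mul_le_mul_of_nonneg_left e1 hA0
      have t2 : σ2/2 * (|f j x| + |f₀ x|) * |f j x - f₀ x|
          ≤ σ2/2 * (S (f j - f₀) + 2 * S f₀) * (S (f j - f₀) * w x) := by
        refine mul_le_mul ?_ e1 (abs_nonneg _) ?_
        · exact mul_le_mul_of_nonneg_left habs (by positivity)
        · have := hS0 (f j - f₀); have := hS0 f₀; positivity
      calc ‖ψ (f j x) - ψ (f₀ x)‖
          ≤ A * |f j x - f₀ x| + σ2/2 * (|f j x| + |f₀ x|) * |f j x - f₀ x| := hdiff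
        _ ≤ A * (S (f j - f₀) * w x)
            + σ2/2 * (S (f j - f₀) + 2 * S f₀) * (S (f j - f₀) * w x) := by
            exact add_le_add t1 t2
        _ = c j * w x := by rw [hcdef]; ring
    calc ‖∫ x, (ψ (f j x) - ψ (f₀ x))‖
        ≤ ∫ x, ‖ψ (f j x) - ψ (f₀ x)‖ := norm_integral_le_integral_norm _
      _ ≤ ∫ x, c j * w x := by
          refine integral_mono (hIj.sub hI0).norm (hwint.const_mul _) hptw
      _ = c j * ∫ x, w x := integral_const_mul _ _
  have hctend : Tendsto (fun j => c j * ∫ x, w x) atTop (𝓝 0) := by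
    have h1 : Tendsto (fun j => A * S (f j - f₀)) atTop (𝓝 0) := by
      simpa using hStend.const_mul A
    have h2 : Tendsto (fun j => σ2/2 * (S (f j - f₀) + 2 * S f₀) * S (f j - f₀))
        atTop (𝓝 0) := by
      have := (((hStend.add (tendsto_const_nhds (x := 2 * S f₀))).const_mul
        (σ2/2)).mul hStend)
      simpa using this
    have := (h1.add h2).mul_const (∫ x, w x)
    simpa [hcdef] using this
  have hmain : Tendsto (fun j => ∫ x, ψ (f j x)) atTop (𝓝 (∫ x, ψ (f₀ x))) := by
    rw [tendsto_iff_norm_sub_tendsto_zero]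
    exact squeeze_zero (fun j => norm_nonneg _) hkey hctend
  exact ⟨hmain, (Complex.continuous_exp.tendsto _).comp hmain⟩
end

section
/- Let ψ be the Lévy characteristic with drift b, diffusion σ², Poisson intensity λ and jump measure r, and let C_η(f) = exp(∫_{ℝ^d} ψ(f(x)) dx) for real-valued Schwartz f on ℝ^d. Then C_η is positive definite on the real Schwartz space: for every N ∈ ℕ, all real-valued Schwartz functions f_1, …, f_N on ℝ^d and all complex numbers c_1, …, c_N, the sum Σ_{j=1}^N Σ_{l=1}^N c_j · conj(c_l) · C_η(f_j − f_l) is a nonnegative real number. -/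
open MeasureTheory Filter Topology ComplexOrder

/-- The characteristic functional of generalized white noise,
`C_η(f) = exp (∫ ψ(f(x)) dx)`. -/
noncomputable def charFunctional (b σ2 lam : ℝ) (r : Measure ℝ) (d : ℕ)
    (f : SchwartzMap (EuclideanSpace ℝ (Fin d)) ℝ) : ℂ :=
  Complex.exp (∫ x, levyChar b σ2 lam r (f x))

open Complex

/-! ### Auxiliary lemmas -/

lemma norm_exp_I_mul_sub_one (θ : ℝ) : ‖Complex.exp (Complex.I * θ) - 1‖ ≤ |θ| := by
  have h : Complex.exp (Complex.I * θ) - 1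
      = ((Real.cos θ - 1 : ℝ) : ℂ) + ((Real.sin θ : ℝ) : ℂ) * Complex.I := by
    rw [mul_comm, Complex.exp_mul_I]
    push_cast
    ring
  have hc : Real.cos θ = 1 - 2 * Real.sin (θ/2)^2 := by
    have h1 := Real.cos_sq (θ/2)
    have h2 := Real.sin_sq_add_cos_sq (θ/2)
    rw [show 2*(θ/2) = θ by ring] at h1
    linarith
  have hsin : Real.sin (θ/2)^2 ≤ (θ/2)^2 := by
    have := Real.abs_sin_le_abs (x := θ/2)
    nlinarith [abs_nonneg (Real.sin (θ/2)), abs_nonneg (θ/2), _root_.sq_abs (Real.sin (θ/2)), _root_.sq_abs (θ/2)]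
  calc ‖Complex.exp (Complex.I * θ) - 1‖
      = Real.sqrt ((Real.cos θ - 1)^2 + Real.sin θ^2) := by
        rw [h, Complex.norm_add_mul_I]
    _ ≤ Real.sqrt (θ^2) := Real.sqrt_le_sqrt (by nlinarith [Real.sin_sq_add_cos_sq θ])
    _ = |θ| := Real.sqrt_sq_eq_abs θ

lemma exp_factor (s a bb : ℝ) :
    Complex.exp (Complex.I * s * ((a - bb : ℝ) : ℂ)) - 1
      = (Complex.exp (Complex.I * s * a) - 1) * (starRingEnd ℂ) (Complex.exp (Complex.I * s * bb) - 1)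
        + (Complex.exp (Complex.I * s * a) - 1) + (starRingEnd ℂ) (Complex.exp (Complex.I * s * bb) - 1) := by
  have hconj : (starRingEnd ℂ) (Complex.exp (Complex.I * s * bb) - 1)
      = (Complex.exp (Complex.I * s * bb))⁻¹ - 1 := by
    rw [map_sub, ← Complex.exp_conj, map_one, ← Complex.exp_neg]
    congr 2
    simp [Complex.conj_I]
  have h1 : Complex.exp (Complex.I * s * ((a - bb : ℝ) : ℂ))
      = Complex.exp (Complex.I * s * a) * (Complex.exp (Complex.I * s * bb))⁻¹ := by
    rw [← Complex.exp_neg, ← Complex.exp_add]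
    congr 1
    push_cast
    ring
  rw [hconj, h1]
  ring


lemma gram_nonneg {N : ℕ} {ι : Type*} [Fintype ι] (w : Fin N → ι → ℂ) (d : Fin N → ℂ) :
    0 ≤ ∑ j : Fin N, ∑ l : Fin N, d j * (starRingEnd ℂ) (d l) * ∑ k : ι, w j k * (starRingEnd ℂ) (w l k) := by
  have key : ∀ j l, d j * (starRingEnd ℂ) (d l) * ∑ k : ι, w j k * (starRingEnd ℂ) (w l k)
      = ∑ k : ι, (d j * w j k) * (starRingEnd ℂ) (d l * w l k) := by
    intro j l
    rw [Finset.mul_sum]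
    refine Finset.sum_congr rfl fun k _ => ?_
    simp only [map_mul]
    ring
  simp_rw [key]
  have swap1 : ∑ j : Fin N, ∑ l : Fin N, ∑ k : ι, (d j * w j k) * (starRingEnd ℂ) (d l * w l k)
      = ∑ k : ι, ∑ j : Fin N, ∑ l : Fin N, (d j * w j k) * (starRingEnd ℂ) (d l * w l k) := by
    conv_lhs => enter [2, j]; rw [Finset.sum_comm]
    rw [Finset.sum_comm]
  rw [swap1]
  apply Finset.sum_nonneg
  intro k _
  have : ∑ j : Fin N, ∑ l : Fin N, (d j * w j k) * (starRingEnd ℂ) (d l * w l k)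
      = ((Complex.normSq (∑ j, d j * w j k) : ℝ) : ℂ) := by
    rw [← Complex.mul_conj, map_sum, Finset.sum_mul_sum]
  rw [this]
  exact_mod_cast Complex.zero_le_real.2 (Complex.normSq_nonneg _)

lemma pd_exp {N : ℕ} (M : Fin N → Fin N → ℂ)
    (hherm : ∀ j l, (starRingEnd ℂ) (M j l) = M l j)
    (hpsd : ∀ c : Fin N → ℂ, 0 ≤ ∑ j : Fin N, ∑ l : Fin N, c j * (starRingEnd ℂ) (c l) * M j l)
    (d : Fin N → ℂ) :
    0 ≤ ∑ j : Fin N, ∑ l : Fin N, d j * (starRingEnd ℂ) (d l) * Complex.exp (M j l) := by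
  classical
  obtain ⟨B, hB⟩ : ∃ B : Matrix (Fin N) (Fin N) ℂ, (Matrix.of M) = B.conjTranspose * B := by
    open scoped MatrixOrder in
    refine CStarAlgebra.nonneg_iff_eq_star_mul_self.mp
      (Matrix.PosSemidef.nonneg (Matrix.posSemidef_iff_dotProduct_mulVec.mpr ?_))
    constructor
    · ext j l
      simpa [Matrix.conjTranspose_apply] using hherm l j
    · intro x
      have h := hpsd (star x)
      convert h using 1
      simp only [dotProduct, Matrix.mulVec, Pi.star_apply, Matrix.of_apply,
        Finset.mul_sum]
      refine Finset.sum_congr rfl fun j _ => Finset.sum_congr rfl fun l _ => ?_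
      simp only [RCLike.star_def, RingHomCompTriple.comp_apply, RingHom.id_apply, starRingEnd_self_apply]
      ring
  have hM : ∀ j l, M j l = ∑ k, (starRingEnd ℂ) (B k j) * B k l := by
    intro j l
    have h : (Matrix.of M) j l = (B.conjTranspose * B) j l := by rw [hB]
    simpa [Matrix.mul_apply, Matrix.conjTranspose_apply] using h
  -- nonnegativity of each power term
  have hpow : ∀ n : ℕ, 0 ≤ ∑ j : Fin N, ∑ l : Fin N, d j * (starRingEnd ℂ) (d l) * (M j l) ^ n := by
    intro n
    have hrw : ∀ j l : Fin N, (M j l) ^ n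
        = ∑ g : Fin n → Fin N, (starRingEnd ℂ) (∏ i, B (g i) j)
            * (starRingEnd ℂ) ((starRingEnd ℂ) (∏ i, B (g i) l)) := by
      intro j l
      have h1 : (M j l) ^ n = ∏ _i : Fin n, (∑ k, (starRingEnd ℂ) (B k j) * B k l) := by
        rw [Finset.prod_const, Finset.card_univ, Fintype.card_fin, hM j l]
      rw [h1, Finset.prod_univ_sum]
      rw [Fintype.piFinset_univ]
      refine Finset.sum_congr rfl fun g _ => ?_
      rw [Finset.prod_mul_distrib, ← map_prod]
      simp
    have h0 := gram_nonneg (ι := Fin n → Fin N)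
      (fun j g => (starRingEnd ℂ) (∏ i, B (g i) j)) d
    simpa only [← hrw] using h0
  have hsum : ∀ j l : Fin N, Summable (fun n : ℕ => d j * (starRingEnd ℂ) (d l) * ((M j l) ^ n / n.factorial)) :=
    fun j l => (NormedSpace.expSeries_div_summable (M j l)).mul_left _
  have hexp : ∀ j l : Fin N, d j * (starRingEnd ℂ) (d l) * Complex.exp (M j l)
      = ∑' n : ℕ, d j * (starRingEnd ℂ) (d l) * ((M j l) ^ n / n.factorial) := by
    intro j l
    rw [Complex.exp_eq_exp_ℂ, NormedSpace.exp_eq_tsum_div]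
    exact tsum_mul_left.symm
  simp_rw [hexp]
  have hswap : ∑ j : Fin N, ∑ l : Fin N, ∑' n : ℕ, d j * (starRingEnd ℂ) (d l) * ((M j l) ^ n / n.factorial)
      = ∑' n : ℕ, ∑ j : Fin N, ∑ l : Fin N, d j * (starRingEnd ℂ) (d l) * ((M j l) ^ n / n.factorial) := by
    have h1 : ∀ j : Fin N, ∑ l : Fin N, ∑' n : ℕ, d j * (starRingEnd ℂ) (d l) * ((M j l) ^ n / n.factorial)
        = ∑' n : ℕ, ∑ l : Fin N, d j * (starRingEnd ℂ) (d l) * ((M j l) ^ n / n.factorial) :=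
      fun j => (Summable.tsum_finsetSum (fun l _ => hsum j l)).symm
    simp_rw [h1]
    exact (Summable.tsum_finsetSum (fun j _ => summable_sum (fun l _ => hsum j l))).symm
  rw [hswap]
  letI := Complex.orderClosedTopology
  apply tsum_nonneg
  intro n
  have : ∑ j : Fin N, ∑ l : Fin N, d j * (starRingEnd ℂ) (d l) * ((M j l) ^ n / n.factorial)
      = (∑ j : Fin N, ∑ l : Fin N, d j * (starRingEnd ℂ) (d l) * (M j l) ^ n) * ((n.factorial : ℂ))⁻¹ := by
    rw [Finset.sum_mul]
    refine Finset.sum_congr rfl fun j _ => ?_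
    rw [Finset.sum_mul]
    refine Finset.sum_congr rfl fun l _ => ?_
    rw [div_eq_mul_inv]
    ring
  rw [this]
  have hfac : (0:ℂ) ≤ ((n.factorial : ℂ))⁻¹ := by
    have : ((n.factorial : ℂ))⁻¹ = (((n.factorial : ℝ))⁻¹ : ℝ) := by push_cast; ring
    rw [this]
    exact Complex.zero_le_real.2 (by positivity)
  exact mul_nonneg (hpow n) hfac

lemma exp_I_mul_eq (s t : ℝ) : Complex.I * s * t = Complex.I * ((s*t : ℝ) : ℂ) := by push_cast; ring

lemma norm_exp_I_mul_sub_one' (s t : ℝ) : ‖Complex.exp (Complex.I * s * t) - 1‖ ≤ |s| * |t| := by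
  rw [exp_I_mul_eq]
  simpa [abs_mul] using norm_exp_I_mul_sub_one (s*t)

lemma norm_exp_I_mul_sub_one_le_two (s t : ℝ) : ‖Complex.exp (Complex.I * s * t) - 1‖ ≤ 2 := by
  have h := norm_sub_le (Complex.exp (Complex.I * s * t)) 1
  have h2 : ‖Complex.exp (Complex.I * s * t)‖ = 1 := by
    rw [exp_I_mul_eq, show Complex.I * ((s*t : ℝ) : ℂ) = ((s*t : ℝ) : ℂ) * Complex.I from mul_comm _ _]
    exact Complex.norm_exp_ofReal_mul_I _
  simp only [h2, norm_one] at h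
  linarith

variable {d : ℕ}

noncomputable abbrev Hfun (d : ℕ) (f : SchwartzMap (EuclideanSpace ℝ (Fin d)) ℝ) :
    (EuclideanSpace ℝ (Fin d)) × ℝ → ℂ :=
  fun p => Complex.exp (Complex.I * p.2 * f p.1) - 1

lemma Hfun_cont (f : SchwartzMap (EuclideanSpace ℝ (Fin d)) ℝ) : Continuous (Hfun d f) := by
  apply Continuous.sub _ continuous_const
  apply Complex.continuous_exp.comp
  exact ((continuous_const.mul (Complex.continuous_ofReal.comp continuous_snd)).mul
    (Complex.continuous_ofReal.comp (f.continuous.comp continuous_fst)))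

lemma Hfun_integrable (r : Measure ℝ) [IsProbabilityMeasure r]
    (hmom : ∀ n : ℕ, Integrable (fun s : ℝ => |s| ^ n) r)
    (f : SchwartzMap (EuclideanSpace ℝ (Fin d)) ℝ) :
    Integrable (Hfun d f) ((volume : Measure (EuclideanSpace ℝ (Fin d))).prod r) := by
  have hb : Integrable (fun p : (EuclideanSpace ℝ (Fin d)) × ℝ => |f p.1| * |p.2|)
      ((volume : Measure (EuclideanSpace ℝ (Fin d))).prod r) := by
    have h1 : Integrable (fun x : EuclideanSpace ℝ (Fin d) => |f x|) volume := f.integrable.abs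
    have h2 : Integrable (fun s : ℝ => |s|) r := by simpa using hmom 1
    exact h1.mul_prod h2
  refine hb.mono' ((Hfun_cont f).aestronglyMeasurable) ?_
  filter_upwards with p
  calc ‖Hfun d f p‖ ≤ |p.2| * |f p.1| := norm_exp_I_mul_sub_one' _ _
    _ = |f p.1| * |p.2| := mul_comm _ _

lemma Hfun_mul_integrable (r : Measure ℝ) [IsProbabilityMeasure r]
    (hmom : ∀ n : ℕ, Integrable (fun s : ℝ => |s| ^ n) r)
    (f g : SchwartzMap (EuclideanSpace ℝ (Fin d)) ℝ) :
    Integrable (fun p => Hfun d f p * (starRingEnd ℂ) (Hfun d g p))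
      ((volume : Measure (EuclideanSpace ℝ (Fin d))).prod r) := by
  have hb : Integrable (fun p : (EuclideanSpace ℝ (Fin d)) × ℝ => |f p.1| * |p.2| * 2)
      ((volume : Measure (EuclideanSpace ℝ (Fin d))).prod r) := by
    have h1 : Integrable (fun x : EuclideanSpace ℝ (Fin d) => |f x|) volume := f.integrable.abs
    have h2 : Integrable (fun s : ℝ => |s|) r := by simpa using hmom 1
    exact (h1.mul_prod h2).mul_const 2
  refine hb.mono' ?_ ?_
  · exact ((Hfun_cont f).mul (Complex.continuous_conj.comp (Hfun_cont g))).aestronglyMeasurable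
  · filter_upwards with p
    rw [norm_mul, RingHomIsometric.norm_map]
    calc ‖Hfun d f p‖ * ‖Hfun d g p‖ ≤ (|p.2| * |f p.1|) * 2 :=
        mul_le_mul (norm_exp_I_mul_sub_one' _ _) (norm_exp_I_mul_sub_one_le_two _ _)
          (norm_nonneg _) (by positivity)
      _ = |f p.1| * |p.2| * 2 := by ring

lemma schwartz_mul_integrable (f g : SchwartzMap (EuclideanSpace ℝ (Fin d)) ℝ) :
    Integrable (fun x => f x * g x) (volume : Measure (EuclideanSpace ℝ (Fin d))) := by
  obtain ⟨C, hC⟩ : ∃ C, ∀ x, ‖f x‖ ≤ C := ⟨SchwartzMap.seminorm ℝ 0 0 f, fun x => f.norm_le_seminorm ℝ x⟩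
  exact g.integrable.bdd_mul f.continuous.aestronglyMeasurable (Eventually.of_forall hC)

lemma Hfun_conj_integrable (r : Measure ℝ) [IsProbabilityMeasure r]
    (hmom : ∀ n : ℕ, Integrable (fun s : ℝ => |s| ^ n) r)
    (g : SchwartzMap (EuclideanSpace ℝ (Fin d)) ℝ) :
    Integrable (fun p => (starRingEnd ℂ) (Hfun d g p))
      ((volume : Measure (EuclideanSpace ℝ (Fin d))).prod r) := by
  refine (Hfun_integrable r hmom g).norm.mono' ?_ ?_
  · exact (Complex.continuous_conj.comp (Hfun_cont g)).aestronglyMeasurable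
  · filter_upwards with p
    exact (RCLike.norm_conj _).le

lemma phi_cont (r : Measure ℝ) [IsProbabilityMeasure r] :
    Continuous fun t : ℝ => ∫ s : ℝ, (Complex.exp (Complex.I * s * t) - 1) ∂r := by
  apply continuous_of_dominated (bound := fun _ => (2:ℝ))
  · intro t
    apply Continuous.aestronglyMeasurable
    exact (Complex.continuous_exp.comp ((continuous_const.mul Complex.continuous_ofReal).mul
      continuous_const)).sub continuous_const
  · intro t
    filter_upwards with s
    exact norm_exp_I_mul_sub_one_le_two s t
  · exact integrable_const 2
  · filter_upwards with s
    exact (Complex.continuous_exp.comp ((continuous_const.mul continuous_const).mul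
      Complex.continuous_ofReal)).sub continuous_const

lemma phi_norm_le (r : Measure ℝ) [IsProbabilityMeasure r]
    (hmom : ∀ n : ℕ, Integrable (fun s : ℝ => |s| ^ n) r) (t : ℝ) :
    ‖∫ s : ℝ, (Complex.exp (Complex.I * s * t) - 1) ∂r‖ ≤ (∫ s : ℝ, |s| ∂r) * |t| := by
  have h1 : Integrable (fun s : ℝ => ‖Complex.exp (Complex.I * s * t) - 1‖) r := by
    refine (integrable_const (2:ℝ)).mono' ?_ ?_
    · apply Continuous.aestronglyMeasurable
      exact ((Complex.continuous_exp.comp ((continuous_const.mul Complex.continuous_ofReal).mul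
        continuous_const)).sub continuous_const).norm
    · filter_upwards with s
      rw [Real.norm_eq_abs, _root_.abs_of_nonneg (norm_nonneg _)]
      exact norm_exp_I_mul_sub_one_le_two s t
  have h2 : Integrable (fun s : ℝ => |s| * |t|) r := by
    simpa using (hmom 1).mul_const |t|
  calc ‖∫ s : ℝ, (Complex.exp (Complex.I * s * t) - 1) ∂r‖
      ≤ ∫ s : ℝ, ‖Complex.exp (Complex.I * s * t) - 1‖ ∂r := norm_integral_le_integral_norm _
    _ ≤ ∫ s : ℝ, |s| * |t| ∂r := integral_mono h1 h2 (fun s => norm_exp_I_mul_sub_one' s t)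
    _ = (∫ s : ℝ, |s| ∂r) * |t| := integral_mul_const _ _

lemma phi_comp_integrable (r : Measure ℝ) [IsProbabilityMeasure r]
    (hmom : ∀ n : ℕ, Integrable (fun s : ℝ => |s| ^ n) r)
    (u : SchwartzMap (EuclideanSpace ℝ (Fin d)) ℝ) :
    Integrable (fun x => ∫ s : ℝ, (Complex.exp (Complex.I * s * u x) - 1) ∂r)
      (volume : Measure (EuclideanSpace ℝ (Fin d))) := by
  have hbound : Integrable (fun x : EuclideanSpace ℝ (Fin d) => (∫ s : ℝ, |s| ∂r) * |u x|) volume :=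
    u.integrable.abs.const_mul _
  refine hbound.mono' ?_ ?_
  · exact ((phi_cont r).comp u.continuous).aestronglyMeasurable
  · filter_upwards with x
    exact phi_norm_le r hmom (u x)

lemma levy_integral_eq (b σ2 lam : ℝ) (r : Measure ℝ) [IsProbabilityMeasure r]
    (hmom : ∀ n : ℕ, Integrable (fun s : ℝ => |s| ^ n) r)
    (f g : SchwartzMap (EuclideanSpace ℝ (Fin d)) ℝ) :
    ∫ x, levyChar b σ2 lam r ((f - g) x) =
      (Complex.I * b * ((∫ x, f x : ℝ) : ℂ) - ((σ2/2 : ℝ) : ℂ) * ((∫ x, f x * f x : ℝ) : ℂ)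
        + lam * ∫ p, Hfun d f p ∂((volume : Measure (EuclideanSpace ℝ (Fin d))).prod r))
      + (starRingEnd ℂ) (Complex.I * b * ((∫ x, g x : ℝ) : ℂ)
          - ((σ2/2 : ℝ) : ℂ) * ((∫ x, g x * g x : ℝ) : ℂ)
          + lam * ∫ p, Hfun d g p ∂((volume : Measure (EuclideanSpace ℝ (Fin d))).prod r))
      + ((σ2 : ℂ) * ((∫ x, f x * g x : ℝ) : ℂ)
        + lam * ∫ p, Hfun d f p * (starRingEnd ℂ) (Hfun d g p)
            ∂((volume : Measure (EuclideanSpace ℝ (Fin d))).prod r)) := by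
  set μ := (volume : Measure (EuclideanSpace ℝ (Fin d))).prod r with hμ
  set u := f - g with hu
  -- integrability of the three pieces
  have hT1 : Integrable (fun x => Complex.I * b * ((u x : ℝ) : ℂ)) volume :=
    (u.integrable.ofReal (𝕜 := ℂ)).const_mul _
  have hT2' : Integrable (fun x => ((u x * u x : ℝ) : ℂ)) volume :=
    (schwartz_mul_integrable u u).ofReal (𝕜 := ℂ)
  have hT2 : Integrable (fun x => ((σ2/2 : ℝ) : ℂ) * ((u x : ℝ) : ℂ) ^ 2) volume := by
    refine (hT2'.const_mul ((σ2/2 : ℝ) : ℂ)).congr (Eventually.of_forall fun x => ?_)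
    push_cast
    ring
  have hT3 : Integrable (fun x => (lam : ℂ) * ∫ s : ℝ, (Complex.exp (Complex.I * s * u x) - 1) ∂r)
      volume := (phi_comp_integrable r hmom u).const_mul _
  have hsplit : ∫ x, levyChar b σ2 lam r (u x)
      = (∫ x, Complex.I * b * ((u x : ℝ) : ℂ)) - (∫ x, ((σ2/2 : ℝ) : ℂ) * ((u x : ℝ) : ℂ) ^ 2)
        + ∫ x, (lam : ℂ) * ∫ s : ℝ, (Complex.exp (Complex.I * s * u x) - 1) ∂r := by
    have h12 : Integrable
        (fun x => Complex.I * b * ((u x : ℝ) : ℂ) - ((σ2/2 : ℝ) : ℂ) * ((u x : ℝ) : ℂ) ^ 2)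
        volume := hT1.sub hT2
    have hrfl : (fun x : EuclideanSpace ℝ (Fin d) => levyChar b σ2 lam r (u x))
        = fun x => (Complex.I * b * ((u x : ℝ) : ℂ) - ((σ2/2 : ℝ) : ℂ) * ((u x : ℝ) : ℂ) ^ 2)
          + (lam : ℂ) * ∫ s : ℝ, (Complex.exp (Complex.I * s * u x) - 1) ∂r := rfl
    rw [hrfl, integral_add h12 hT3, integral_sub hT1 hT2]
  rw [hsplit]
  -- first piece
  have e1 : (∫ x, Complex.I * b * ((u x : ℝ) : ℂ))
      = Complex.I * b * (((∫ x, f x : ℝ) - (∫ x, g x : ℝ) : ℝ) : ℂ) := by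
    rw [integral_const_mul, integral_complex_ofReal]
    have h' : (∫ x, u x ∂(volume : Measure (EuclideanSpace ℝ (Fin d))))
        = ∫ x, (f x - g x) ∂(volume : Measure (EuclideanSpace ℝ (Fin d))) :=
      integral_congr_ae (Eventually.of_forall fun x => by simp [hu, SchwartzMap.sub_apply])
    rw [h', integral_sub f.integrable g.integrable]
  -- second piece
  have e2 : (∫ x, ((σ2/2 : ℝ) : ℂ) * ((u x : ℝ) : ℂ) ^ 2)
      = ((σ2/2 : ℝ) : ℂ) * (((∫ x, f x * f x) - 2 * (∫ x, f x * g x) + (∫ x, g x * g x) : ℝ) : ℂ) := by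
    have hcast : ∀ x : EuclideanSpace ℝ (Fin d), ((u x : ℝ) : ℂ) ^ 2 = ((u x * u x : ℝ) : ℂ) := by
      intro x; push_cast; ring
    simp_rw [hcast]
    rw [integral_const_mul, integral_complex_ofReal]
    have : (∫ x, u x * u x) = (∫ x, f x * f x) - 2 * (∫ x, f x * g x) + (∫ x, g x * g x) := by
      have hptw : ∀ x : EuclideanSpace ℝ (Fin d),
          u x * u x = f x * f x - 2 * (f x * g x) + g x * g x := by
        intro x; simp only [hu, SchwartzMap.sub_apply]; ring
      rw [integral_congr_ae (Eventually.of_forall hptw)]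
      have i1 : Integrable (fun x => f x * f x - 2 * (f x * g x))
          (volume : Measure (EuclideanSpace ℝ (Fin d))) :=
        (schwartz_mul_integrable f f).sub ((schwartz_mul_integrable f g).const_mul 2)
      rw [integral_add i1 (schwartz_mul_integrable g g),
        integral_sub (schwartz_mul_integrable f f) ((schwartz_mul_integrable f g).const_mul 2),
        integral_const_mul]
    rw [this]
  -- third piece
  have e3 : (∫ x, (lam : ℂ) * ∫ s : ℝ, (Complex.exp (Complex.I * s * u x) - 1) ∂r)
      = (lam : ℂ) * ((∫ p, Hfun d f p * (starRingEnd ℂ) (Hfun d g p) ∂μ)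
          + (∫ p, Hfun d f p ∂μ) + (starRingEnd ℂ) (∫ p, Hfun d g p ∂μ)) := by
    rw [integral_const_mul]
    congr 1
    have hfub : (∫ x, ∫ s : ℝ, (Complex.exp (Complex.I * s * u x) - 1) ∂r) = ∫ p, Hfun d u p ∂μ :=
      (integral_prod _ (Hfun_integrable r hmom u)).symm
    rw [hfub]
    have hptw : ∀ p : (EuclideanSpace ℝ (Fin d)) × ℝ, Hfun d u p
        = Hfun d f p * (starRingEnd ℂ) (Hfun d g p) + Hfun d f p + (starRingEnd ℂ) (Hfun d g p) := by
      intro p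
      have : u p.1 = f p.1 - g p.1 := by simp [hu, SchwartzMap.sub_apply]
      simp only [Hfun, this]
      exact exp_factor p.2 (f p.1) (g p.1)
    have hK := Hfun_mul_integrable r hmom f g
    have hGf := Hfun_integrable r hmom f
    have hGc := Hfun_conj_integrable r hmom g
    have h12 : Integrable (fun p => Hfun d f p * (starRingEnd ℂ) (Hfun d g p) + Hfun d f p) μ :=
      hK.add hGf
    rw [integral_congr_ae (Eventually.of_forall hptw), integral_add h12 hGc,
      integral_add hK hGf, integral_conj]
  rw [e1, e2, e3]
  simp only [map_add, map_sub, map_mul, Complex.conj_I, Complex.conj_ofReal]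
  push_cast
  ring

lemma integral_gram_nonneg {α : Type*} {m : MeasurableSpace α} (μ : Measure α) {N : ℕ}
    (c : Fin N → ℂ) (φ : Fin N → α → ℂ) (t : ℝ) (ht : 0 ≤ t)
    (hint : ∀ j l, Integrable (fun x => φ j x * (starRingEnd ℂ) (φ l x)) μ) :
    0 ≤ ∑ j : Fin N, ∑ l : Fin N, c j * (starRingEnd ℂ) (c l)
        * ((t : ℂ) * ∫ x, φ j x * (starRingEnd ℂ) (φ l x) ∂μ) := by
  have h1 : ∀ j l : Fin N, c j * (starRingEnd ℂ) (c l)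
        * ((t : ℂ) * ∫ x, φ j x * (starRingEnd ℂ) (φ l x) ∂μ)
      = ∫ x, ((t : ℂ) * (c j * (starRingEnd ℂ) (c l))) * (φ j x * (starRingEnd ℂ) (φ l x)) ∂μ := by
    intro j l
    rw [integral_const_mul]
    ring
  simp_rw [h1]
  have h2 : ∀ j : Fin N, ∑ l : Fin N,
        ∫ x, ((t : ℂ) * (c j * (starRingEnd ℂ) (c l))) * (φ j x * (starRingEnd ℂ) (φ l x)) ∂μ
      = ∫ x, ∑ l : Fin N, ((t : ℂ) * (c j * (starRingEnd ℂ) (c l))) * (φ j x * (starRingEnd ℂ) (φ l x)) ∂μ :=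
    fun j => (integral_finset_sum _ (fun l _ => (hint j l).const_mul _)).symm
  simp_rw [h2]
  rw [← integral_finset_sum _ (fun j _ => integrable_finset_sum _
    (fun l _ => (hint j l).const_mul _))]
  have h3 : ∀ x : α, ∑ j : Fin N, ∑ l : Fin N,
        ((t : ℂ) * (c j * (starRingEnd ℂ) (c l))) * (φ j x * (starRingEnd ℂ) (φ l x))
      = (((t * Complex.normSq (∑ j, c j * φ j x) : ℝ)) : ℂ) := by
    intro x
    calc ∑ j : Fin N, ∑ l : Fin N,
          ((t : ℂ) * (c j * (starRingEnd ℂ) (c l))) * (φ j x * (starRingEnd ℂ) (φ l x))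
        = (t : ℂ) * ∑ j : Fin N, ∑ l : Fin N, (c j * φ j x) * (starRingEnd ℂ) (c l * φ l x) := by
          rw [Finset.mul_sum]
          refine Finset.sum_congr rfl fun j _ => ?_
          rw [Finset.mul_sum]
          refine Finset.sum_congr rfl fun l _ => ?_
          rw [map_mul]
          ring
      _ = (t : ℂ) * ((∑ j, c j * φ j x) * (starRingEnd ℂ) (∑ l, c l * φ l x)) := by
          rw [map_sum, Finset.sum_mul_sum]
      _ = (t : ℂ) * ((Complex.normSq (∑ j, c j * φ j x) : ℝ) : ℂ) := by
          rw [Complex.mul_conj]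
      _ = (((t * Complex.normSq (∑ j, c j * φ j x) : ℝ)) : ℂ) := by push_cast; ring
  simp_rw [h3]
  rw [integral_complex_ofReal]
  exact Complex.zero_le_real.2 (integral_nonneg fun x => mul_nonneg ht (Complex.normSq_nonneg _))

noncomputable def Afun (b σ2 lam : ℝ) (r : Measure ℝ) {d : ℕ}
    (f : SchwartzMap (EuclideanSpace ℝ (Fin d)) ℝ) : ℂ :=
  Complex.I * b * ((∫ x, f x : ℝ) : ℂ) - ((σ2/2 : ℝ) : ℂ) * ((∫ x, f x * f x : ℝ) : ℂ)
    + lam * ∫ p, Hfun d f p ∂((volume : Measure (EuclideanSpace ℝ (Fin d))).prod r)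

noncomputable def Mfun (σ2 lam : ℝ) (r : Measure ℝ) {d : ℕ}
    (f g : SchwartzMap (EuclideanSpace ℝ (Fin d)) ℝ) : ℂ :=
  (σ2 : ℂ) * ((∫ x, f x * g x : ℝ) : ℂ)
    + lam * ∫ p, Hfun d f p * (starRingEnd ℂ) (Hfun d g p)
        ∂((volume : Measure (EuclideanSpace ℝ (Fin d))).prod r)


lemma Mfun_herm (σ2 lam : ℝ) (r : Measure ℝ) {d : ℕ}
    (f g : SchwartzMap (EuclideanSpace ℝ (Fin d)) ℝ) :
    (starRingEnd ℂ) (Mfun σ2 lam r f g) = Mfun σ2 lam r g f := by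
  unfold Mfun
  simp only [map_add, map_mul, Complex.conj_ofReal]
  congr 1
  · norm_cast
    exact congrArg _ (integral_congr_ae (Eventually.of_forall fun x => mul_comm _ _))
  · congr 1
    rw [← integral_conj]
    refine integral_congr_ae (Eventually.of_forall fun p => ?_)
    simp only [map_mul, starRingEnd_self_apply]
    ring

lemma Mfun_psd (σ2 lam : ℝ) (hσ : 0 ≤ σ2) (hlam : 0 ≤ lam) (r : Measure ℝ)
    [IsProbabilityMeasure r]
    (hmom : ∀ n : ℕ, Integrable (fun s : ℝ => |s| ^ n) r)
    {d : ℕ} {N : ℕ} (f : Fin N → SchwartzMap (EuclideanSpace ℝ (Fin d)) ℝ)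
    (c : Fin N → ℂ) :
    0 ≤ ∑ j : Fin N, ∑ l : Fin N, c j * (starRingEnd ℂ) (c l) * Mfun σ2 lam r (f j) (f l) := by
  have hP : ∀ j l : Fin N, ((∫ x, f j x * f l x : ℝ) : ℂ)
      = ∫ x, ((f j x : ℝ) : ℂ) * (starRingEnd ℂ) ((f l x : ℝ) : ℂ)
          ∂(volume : Measure (EuclideanSpace ℝ (Fin d))) := by
    intro j l
    rw [← integral_complex_ofReal]
    exact integral_congr_ae (Eventually.of_forall fun x => by
      simp [Complex.ofReal_mul, Complex.conj_ofReal])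
  have hsplit : ∑ j : Fin N, ∑ l : Fin N, c j * (starRingEnd ℂ) (c l) * Mfun σ2 lam r (f j) (f l)
      = (∑ j : Fin N, ∑ l : Fin N, c j * (starRingEnd ℂ) (c l)
          * ((σ2 : ℂ) * ∫ x, ((f j x : ℝ) : ℂ) * (starRingEnd ℂ) ((f l x : ℝ) : ℂ)
              ∂(volume : Measure (EuclideanSpace ℝ (Fin d)))))
        + ∑ j : Fin N, ∑ l : Fin N, c j * (starRingEnd ℂ) (c l)
          * ((lam : ℂ) * ∫ p, Hfun d (f j) p * (starRingEnd ℂ) (Hfun d (f l) p)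
              ∂((volume : Measure (EuclideanSpace ℝ (Fin d))).prod r)) := by
    rw [← Finset.sum_add_distrib]
    refine Finset.sum_congr rfl fun j _ => ?_
    rw [← Finset.sum_add_distrib]
    refine Finset.sum_congr rfl fun l _ => ?_
    rw [Mfun, hP j l]
    ring
  rw [hsplit]
  have hint1 : ∀ j l : Fin N, Integrable
      (fun x => ((f j x : ℝ) : ℂ) * (starRingEnd ℂ) ((f l x : ℝ) : ℂ))
      (volume : Measure (EuclideanSpace ℝ (Fin d))) := by
    intro j l
    have h0 : Integrable (fun x => ((f j x * f l x : ℝ) : ℂ))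
        (volume : Measure (EuclideanSpace ℝ (Fin d))) :=
      (schwartz_mul_integrable (f j) (f l)).ofReal (𝕜 := ℂ)
    refine h0.congr (Eventually.of_forall fun x => ?_)
    simp [Complex.ofReal_mul, Complex.conj_ofReal]
  exact add_nonneg
    (integral_gram_nonneg _ c (fun j x => ((f j x : ℝ) : ℂ)) σ2 hσ hint1)
    (integral_gram_nonneg _ c (fun j p => Hfun d (f j) p) lam hlam
      (fun j l => Hfun_mul_integrable r hmom (f j) (f l)))

theorem charFunctional_positive_definite
    (b σ2 lam : ℝ) (hσ : 0 ≤ σ2) (hlam : 0 ≤ lam)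
    (r : Measure ℝ) [IsProbabilityMeasure r] (hr0 : r {0} = 0)
    (hmom : ∀ n : ℕ, Integrable (fun s : ℝ => |s| ^ n) r)
    (d : ℕ) (hd : 1 ≤ d) :
    ∀ (N : ℕ) (f : Fin N → SchwartzMap (EuclideanSpace ℝ (Fin d)) ℝ)
      (c : Fin N → ℂ),
      0 ≤ ∑ j : Fin N, ∑ l : Fin N,
        c j * starRingEnd ℂ (c l) * charFunctional b σ2 lam r d (f j - f l) := by
  intro N f c
  have key : ∀ j l : Fin N, charFunctional b σ2 lam r d (f j - f l)
      = Complex.exp (Afun b σ2 lam r (f j)) * (starRingEnd ℂ) (Complex.exp (Afun b σ2 lam r (f l)))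
        * Complex.exp (Mfun σ2 lam r (f j) (f l)) := by
    intro j l
    rw [charFunctional, levy_integral_eq b σ2 lam r hmom (f j) (f l),
      Complex.exp_add, Complex.exp_add, Complex.exp_conj]
    rfl
  have hsum : ∑ j : Fin N, ∑ l : Fin N,
        c j * starRingEnd ℂ (c l) * charFunctional b σ2 lam r d (f j - f l)
      = ∑ j : Fin N, ∑ l : Fin N,
          (c j * Complex.exp (Afun b σ2 lam r (f j)))
            * (starRingEnd ℂ) (c l * Complex.exp (Afun b σ2 lam r (f l)))
            * Complex.exp (Mfun σ2 lam r (f j) (f l)) := by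
    refine Finset.sum_congr rfl fun j _ => Finset.sum_congr rfl fun l _ => ?_
    rw [key j l, map_mul]
    ring
  rw [hsum]
  exact pd_exp (fun j l => Mfun σ2 lam r (f j) (f l))
    (fun j l => Mfun_herm σ2 lam r (f j) (f l))
    (fun c' => Mfun_psd σ2 lam hσ hlam r hmom f c')
    (fun j => c j * Complex.exp (Afun b σ2 lam r (f j)))
end

section
/- Let ψ be the Lévy characteristic with drift b, diffusion σ², Poisson intensity λ and jump measure r, let g : ℝ^d → ℝ be a real-valued Schwartz function, and let n ≥ 3. Then the function F(t) = ∫_{ℝ^d} ψ(t·g(x)) dx is n times differentiable on ℝ and its n-th derivative at t = 0 equals i^n · λ · r_n · ∫_{ℝ^d} g(x)^n dx, where r_n = ∫_ℝ s^n dr(s). -/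
open MeasureTheory Filter Topology

lemma norm_exp_I_mul_sub_one_le (θ : ℝ) : ‖Complex.exp ((θ:ℂ) * Complex.I) - 1‖ ≤ |θ| := by
  have h2 : Real.cos θ = 1 - 2 * Real.sin (θ/2) ^ 2 := by
    have h := Real.cos_two_mul (θ/2)
    have h' := Real.sin_sq_add_cos_sq (θ/2)
    have he : (2:ℝ) * (θ/2) = θ := by ring
    rw [he] at h; nlinarith
  have h3 : Real.sin (θ/2) ^ 2 ≤ (θ/2) ^ 2 := Real.sin_sq_le_sq
  have key : ‖Complex.exp ((θ:ℂ) * Complex.I) - 1‖ ^ 2 ≤ |θ| ^ 2 := by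
    rw [Complex.exp_mul_I, ← Complex.ofReal_cos, ← Complex.ofReal_sin,
      Complex.sq_norm, Complex.normSq_apply]
    simp only [Complex.sub_re, Complex.add_re, Complex.ofReal_re, Complex.mul_re,
      Complex.I_re, Complex.I_im, Complex.ofReal_im, Complex.sub_im, Complex.add_im,
      Complex.mul_im, Complex.one_re, Complex.one_im]
    ring_nf
    nlinarith [Real.sin_sq_add_cos_sq θ, _root_.sq_abs θ]
  exact le_of_pow_le_pow_left₀ two_ne_zero (abs_nonneg θ) key

namespace LevyAux

variable {d : ℕ}

/-- kernel `i s g(x)` -/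
noncomputable def cker (g : SchwartzMap (EuclideanSpace ℝ (Fin d)) ℝ)
    (p : EuclideanSpace ℝ (Fin d) × ℝ) : ℂ :=
  ((p.2 * g p.1 : ℝ) : ℂ) * Complex.I

/-- `(i s g(x))^k exp(i s t g(x)) - [k = 0]` -/
noncomputable def fker (g : SchwartzMap (EuclideanSpace ℝ (Fin d)) ℝ) (k : ℕ) (t : ℝ)
    (p : EuclideanSpace ℝ (Fin d) × ℝ) : ℂ :=
  (cker g p) ^ k * Complex.exp (cker g p * t) - (if k = 0 then 1 else 0)

variable (g : SchwartzMap (EuclideanSpace ℝ (Fin d)) ℝ)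

lemma cont_cker : Continuous (cker g) := by
  exact (Complex.continuous_ofReal.comp
    ((continuous_snd).mul (g.continuous.comp continuous_fst))).mul continuous_const

lemma cont_fker (k : ℕ) (t : ℝ) : Continuous (fker g k t) := by
  exact (((cont_cker g).pow k).mul
    (Complex.continuous_exp.comp ((cont_cker g).mul continuous_const))).sub continuous_const

lemma norm_cker (p : EuclideanSpace ℝ (Fin d) × ℝ) : ‖cker g p‖ = |g p.1| * |p.2| := by
  simp [cker, abs_mul, mul_comm]

lemma norm_exp_cker (t : ℝ) (p : EuclideanSpace ℝ (Fin d) × ℝ) :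
    ‖Complex.exp (cker g p * t)‖ = 1 := by
  have : cker g p * t = ((p.2 * g p.1 * t : ℝ) : ℂ) * Complex.I := by
    simp [cker]; push_cast; ring
  rw [this, Complex.norm_exp_ofReal_mul_I]

lemma norm_fker (k : ℕ) (hk : k ≠ 0) (t : ℝ) (p : EuclideanSpace ℝ (Fin d) × ℝ) :
    ‖fker g k t p‖ = |g p.1| ^ k * |p.2| ^ k := by
  rw [fker, if_neg hk, sub_zero, norm_mul, norm_pow, norm_cker, norm_exp_cker, mul_one,
    mul_pow]

lemma norm_fker_zero (t : ℝ) (p : EuclideanSpace ℝ (Fin d) × ℝ) :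
    ‖fker g 0 t p‖ ≤ |t| * (|g p.1| * |p.2|) := by
  have : cker g p * t = ((p.2 * g p.1 * t : ℝ) : ℂ) * Complex.I := by
    simp [cker]; push_cast; ring
  rw [fker, if_pos rfl, pow_zero, one_mul, this]
  calc ‖Complex.exp (((p.2 * g p.1 * t : ℝ) : ℂ) * Complex.I) - 1‖ ≤ |p.2 * g p.1 * t| :=
        norm_exp_I_mul_sub_one_le _
    _ = |t| * (|g p.1| * |p.2|) := by rw [abs_mul, abs_mul]; ring

lemma deriv_fker (k : ℕ) (t : ℝ) (p : EuclideanSpace ℝ (Fin d) × ℝ) :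
    HasDerivAt (fun t : ℝ => fker g k t p) (fker g (k+1) t p) t := by
  have h : HasDerivAt (fun t : ℝ => Complex.exp (cker g p * t))
      (Complex.exp (cker g p * t) * (cker g p * 1)) t :=
    (((hasDerivAt_id (t:ℂ)).const_mul (cker g p)).cexp).comp_ofReal
  have h2 := (h.const_mul ((cker g p) ^ k)).sub_const (if k = 0 then 1 else 0)
  convert h2 using 1
  case e'_4 => rfl
  case e'_8 => rfl
  rw [fker, if_neg (Nat.succ_ne_zero k), sub_zero, pow_succ]
  ring

lemma pow_abs_g_le (C : ℝ) (hC : ∀ x, |g x| ≤ C) (k : ℕ) (hk : k ≠ 0) (x : EuclideanSpace ℝ (Fin d)) :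
    |g x| ^ k ≤ C ^ (k - 1) * |g x| := by
  obtain ⟨m, rfl⟩ := Nat.exists_eq_succ_of_ne_zero hk
  rw [pow_succ, Nat.succ_sub_one]
  exact mul_le_mul_of_nonneg_right (pow_le_pow_left₀ (abs_nonneg _) (hC x) m) (abs_nonneg _)

lemma int_gpow (k : ℕ) (hk : k ≠ 0) :
    Integrable (fun x : EuclideanSpace ℝ (Fin d) => |g x| ^ k) := by
  set C := (SchwartzMap.seminorm ℝ 0 0) g with hCdef
  have hC : ∀ x, |g x| ≤ C := fun x => by
    simpa [Real.norm_eq_abs] using g.norm_le_seminorm ℝ x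
  refine Integrable.mono' ((g.integrable.norm).const_mul (C ^ (k-1)))
    ((g.continuous.abs.pow k).aestronglyMeasurable) (ae_of_all _ fun x => ?_)
  simp only [Real.norm_eq_abs, abs_abs, abs_pow]
  simpa [Real.norm_eq_abs] using pow_abs_g_le g C hC k hk x

end LevyAux

namespace LevyAux
open Metric
variable {d : ℕ} (g : SchwartzMap (EuclideanSpace ℝ (Fin d)) ℝ)
  (r : Measure ℝ) [IsProbabilityMeasure r]
variable (hmom : ∀ n : ℕ, Integrable (fun s : ℝ => |s| ^ n) r)
include hmom

lemma int_bound (k : ℕ) (hk : k ≠ 0) :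
    Integrable (fun p : EuclideanSpace ℝ (Fin d) × ℝ => |g p.1| ^ k * |p.2| ^ k)
      ((volume : Measure (EuclideanSpace ℝ (Fin d))).prod r) :=
  (int_gpow g k hk).mul_prod (hmom k)

lemma int_fker (k : ℕ) (hk : k ≠ 0) (t : ℝ) :
    Integrable (fker g k t) ((volume : Measure (EuclideanSpace ℝ (Fin d))).prod r) :=
  (int_bound g r hmom k hk).mono' (cont_fker g k t).aestronglyMeasurable
    (ae_of_all _ fun p => le_of_eq (norm_fker g k hk t p))

lemma int_fker_zero (t : ℝ) :
    Integrable (fker g 0 t) ((volume : Measure (EuclideanSpace ℝ (Fin d))).prod r) := by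
  refine (((int_bound g r hmom 1 one_ne_zero).const_mul |t|).mono'
    (cont_fker g 0 t).aestronglyMeasurable (ae_of_all _ fun p => ?_))
  simpa [pow_one] using norm_fker_zero g t p

lemma int_fker' (k : ℕ) (t : ℝ) :
    Integrable (fker g k t) ((volume : Measure (EuclideanSpace ℝ (Fin d))).prod r) := by
  rcases Nat.eq_zero_or_pos k with h | h
  · subst h; exact int_fker_zero g r hmom t
  · exact int_fker g r hmom k h.ne' t

lemma hasDerivAt_Phi (k : ℕ) (t₀ : ℝ) :
    HasDerivAt (fun t : ℝ => ∫ p, fker g k t p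
        ∂((volume : Measure (EuclideanSpace ℝ (Fin d))).prod r))
      (∫ p, fker g (k+1) t₀ p
        ∂((volume : Measure (EuclideanSpace ℝ (Fin d))).prod r)) t₀ := by
  refine (hasDerivAt_integral_of_dominated_loc_of_deriv_le (Metric.ball_mem_nhds t₀ one_pos)
    (Eventually.of_forall fun t => (cont_fker g k t).aestronglyMeasurable)
    (int_fker' g r hmom k t₀)
    (cont_fker g (k+1) t₀).aestronglyMeasurable
    (ae_of_all _ fun p t _ => le_of_eq (norm_fker g (k+1) (Nat.succ_ne_zero k) t p))
    (int_bound g r hmom (k+1) (Nat.succ_ne_zero k))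
    (ae_of_all _ fun p t _ => deriv_fker g k t p)).2

end LevyAux

namespace LevyAux
open Metric
variable {d : ℕ} (g : SchwartzMap (EuclideanSpace ℝ (Fin d)) ℝ)
  (r : Measure ℝ) [IsProbabilityMeasure r]

noncomputable def Phi (g : SchwartzMap (EuclideanSpace ℝ (Fin d)) ℝ) (r : Measure ℝ)
    (k : ℕ) (t : ℝ) : ℂ :=
  ∫ p, fker g k t p ∂((volume : Measure (EuclideanSpace ℝ (Fin d))).prod r)

lemma Phi_at_zero (n : ℕ) (hn : n ≠ 0) :
    Phi g r n 0 =
      Complex.I ^ n * ((∫ s, s ^ n ∂r : ℝ) : ℂ) * ((∫ x, g x ^ n : ℝ) : ℂ) := by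
  have hpt : ∀ p : EuclideanSpace ℝ (Fin d) × ℝ, fker g n 0 p =
      Complex.I ^ n * (((g p.1 ^ n : ℝ) : ℂ) * ((p.2 ^ n : ℝ) : ℂ)) := by
    intro p
    simp only [fker, cker, if_neg hn, Complex.ofReal_mul, sub_zero, Complex.ofReal_zero,
      mul_zero, zero_mul, Complex.exp_zero, mul_one]
    push_cast
    ring
  rw [Phi]
  simp_rw [hpt]
  rw [integral_const_mul, MeasureTheory.integral_prod_mul
    (fun x : EuclideanSpace ℝ (Fin d) => ((g x ^ n : ℝ) : ℂ))
    (fun s : ℝ => ((s ^ n : ℝ) : ℂ))]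
  have h1 : ∫ x : EuclideanSpace ℝ (Fin d), ((g x ^ n : ℝ) : ℂ) = ((∫ x, g x ^ n : ℝ) : ℂ) :=
    integral_ofReal
  have h2 : ∫ s : ℝ, ((s ^ n : ℝ) : ℂ) ∂r = ((∫ s : ℝ, s ^ n ∂r : ℝ) : ℂ) := integral_ofReal
  rw [h1, h2]
  ring

variable (hmom : ∀ n : ℕ, Integrable (fun s : ℝ => |s| ^ n) r)
include hmom

lemma hasDerivAt_Phi' (k : ℕ) (t₀ : ℝ) :
    HasDerivAt (Phi g r k) (Phi g r (k+1) t₀) t₀ := hasDerivAt_Phi g r hmom k t₀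

lemma decomp (b σ2 lam : ℝ) (t : ℝ) :
    ∫ x, levyChar b σ2 lam r (t * g x) =
      Complex.I * b * ((∫ x, g x : ℝ) : ℂ) * t
        - ((σ2 / 2 : ℝ) : ℂ) * ((∫ x, g x ^ 2 : ℝ) : ℂ) * (t : ℂ) ^ 2
        + lam * Phi g r 0 t := by
  have hpt : ∀ x, levyChar b σ2 lam r (t * g x) =
      (Complex.I * b * ((t * g x : ℝ) : ℂ)
        - ((σ2/2 : ℝ) : ℂ) * (((t * g x) ^ 2 : ℝ) : ℂ))
      + (lam : ℂ) * ∫ s, fker g 0 t (x, s) ∂r := by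
    intro x
    rw [levyChar]
    have harg : ∀ s : ℝ, Complex.exp (Complex.I * s * ((t * g x : ℝ) : ℂ)) - 1
        = fker g 0 t (x, s) := by
      intro s
      simp only [fker, cker, pow_zero, one_mul, if_pos rfl]
      congr 1
      congr 1
      push_cast
      ring
    simp_rw [harg]
    push_cast
    ring
  have hA : Integrable (fun x : EuclideanSpace ℝ (Fin d) =>
      Complex.I * b * ((t * g x : ℝ) : ℂ)) :=
    ((g.integrable.const_mul t).ofReal.const_mul _)
  have hBr : Integrable (fun x : EuclideanSpace ℝ (Fin d) => (t * g x) ^ 2) := by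
    refine ((int_gpow g 2 two_ne_zero).const_mul (t^2)).congr (ae_of_all _ fun x => ?_)
    simp only [_root_.sq_abs]; ring
  have hB : Integrable (fun x : EuclideanSpace ℝ (Fin d) =>
      ((σ2/2 : ℝ) : ℂ) * (((t * g x) ^ 2 : ℝ) : ℂ)) := hBr.ofReal.const_mul _
  have hC : Integrable (fun x : EuclideanSpace ℝ (Fin d) => ∫ s, fker g 0 t (x, s) ∂r) :=
    (int_fker_zero g r hmom t).integral_prod_left
  have hAB : Integrable (fun x : EuclideanSpace ℝ (Fin d) =>
      Complex.I * b * ((t * g x : ℝ) : ℂ) - ((σ2/2 : ℝ) : ℂ) * (((t * g x) ^ 2 : ℝ) : ℂ)) :=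
    hA.sub hB
  have hCl : Integrable (fun x : EuclideanSpace ℝ (Fin d) =>
      (lam : ℂ) * ∫ s, fker g 0 t (x, s) ∂r) := hC.const_mul _
  simp_rw [hpt]
  rw [integral_add hAB hCl, integral_sub hA hB,
    integral_const_mul, integral_const_mul, integral_const_mul]
  have e1 : ∫ x : EuclideanSpace ℝ (Fin d), ((t * g x : ℝ) : ℂ) = ((∫ x, t * g x : ℝ) : ℂ) :=
    integral_ofReal
  have e2 : ∫ x : EuclideanSpace ℝ (Fin d), (((t * g x) ^ 2 : ℝ) : ℂ)
      = ((∫ x, (t * g x) ^ 2 : ℝ) : ℂ) := integral_ofReal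
  have e3 : (∫ x : EuclideanSpace ℝ (Fin d), ∫ s, fker g 0 t (x, s) ∂r) = Phi g r 0 t :=
    (MeasureTheory.integral_prod _ (int_fker_zero g r hmom t)).symm
  rw [e1, e2, e3, integral_const_mul]
  have e4 : ∫ x : EuclideanSpace ℝ (Fin d), (t * g x) ^ 2 = t ^ 2 * ∫ x, g x ^ 2 := by
    simp_rw [mul_pow]
    exact integral_const_mul _ _
  rw [e4]
  push_cast
  ring

end LevyAux

namespace LevyAux


noncomputable def Pl (b σ2 : ℝ) (c1 c2 : ℂ) (k : ℕ) (t : ℝ) : ℂ :=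
  if k = 0 then Complex.I * b * c1 * t - ((σ2/2 : ℝ) : ℂ) * c2 * (t:ℂ)^2
  else if k = 1 then Complex.I * b * c1 - (σ2 : ℂ) * c2 * t
  else if k = 2 then -((σ2 : ℂ) * c2)
  else 0

lemma hasDerivAt_Pl (b σ2 : ℝ) (c1 c2 : ℂ) (k : ℕ) (t : ℝ) :
    HasDerivAt (Pl b σ2 c1 c2 k) (Pl b σ2 c1 c2 (k+1) t) t := by
  match k with
  | 0 =>
    have h1 : HasDerivAt (fun t : ℝ => Complex.I * b * c1 * t) (Complex.I * b * c1) t := by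
      simpa using ((hasDerivAt_id (t:ℂ)).const_mul (Complex.I * b * c1)).comp_ofReal
    have h2 : HasDerivAt (fun t : ℝ => ((σ2/2:ℝ):ℂ) * c2 * (t:ℂ)^2)
        (((σ2/2:ℝ):ℂ) * c2 * (2 * (t:ℂ))) t := by
      simpa [mul_comm, mul_assoc, mul_left_comm] using
        ((hasDerivAt_pow 2 (t:ℂ)).const_mul (((σ2/2:ℝ):ℂ) * c2)).comp_ofReal
    have := h1.sub h2
    have e1 : Pl b σ2 c1 c2 0 = fun t : ℝ =>
        Complex.I * b * c1 * t - ((σ2/2 : ℝ) : ℂ) * c2 * (t:ℂ)^2 := by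
      funext u; simp [Pl]
    have e2 : Pl b σ2 c1 c2 1 t = Complex.I * b * c1 - (σ2 : ℂ) * c2 * t := by simp [Pl]
    rw [e1, e2]
    convert this using 1
    case e'_4 => rfl
    case e'_8 => rfl
    push_cast
    ring
  | 1 =>
    have h1 : HasDerivAt (fun t : ℝ => (σ2 : ℂ) * c2 * t) ((σ2 : ℂ) * c2) t := by
      simpa using ((hasDerivAt_id (t:ℂ)).const_mul ((σ2:ℂ) * c2)).comp_ofReal
    have := (hasDerivAt_const t (Complex.I * b * c1)).sub h1
    have e1 : Pl b σ2 c1 c2 1 = fun t : ℝ => Complex.I * b * c1 - (σ2 : ℂ) * c2 * t := by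
      funext u; simp [Pl]
    have e2 : Pl b σ2 c1 c2 2 t = -((σ2 : ℂ) * c2) := by simp [Pl]
    rw [e1, e2]
    convert this using 1
    case e'_4 => rfl
    case e'_8 => rfl
    ring
  | 2 =>
    have e1 : Pl b σ2 c1 c2 2 = fun _ : ℝ => -((σ2 : ℂ) * c2) := by funext u; simp [Pl]
    have e2 : Pl b σ2 c1 c2 3 t = 0 := by simp [Pl]
    rw [e1, e2]
    exact hasDerivAt_const t _
  | (m+3) =>
    have e1 : Pl b σ2 c1 c2 (m+3) = fun _ : ℝ => (0 : ℂ) := by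
      funext u; simp [Pl]
    have e2 : Pl b σ2 c1 c2 (m+3+1) t = 0 := by simp [Pl]
    rw [e1, e2]
    exact hasDerivAt_const t 0

end LevyAux

theorem nth_derivative_of_smeared_levyChar_is_cumulant
    (b σ2 lam : ℝ) (hσ : 0 ≤ σ2) (hlam : 0 ≤ lam)
    (r : Measure ℝ) [IsProbabilityMeasure r] (hr0 : r {0} = 0)
    (hmom : ∀ n : ℕ, Integrable (fun s : ℝ => |s| ^ n) r)
    (d : ℕ) (hd : 1 ≤ d)
    (g : SchwartzMap (EuclideanSpace ℝ (Fin d)) ℝ)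
    (n : ℕ) (hn : 3 ≤ n) :
    (∀ k : ℕ, k < n →
      Differentiable ℝ (iteratedDeriv k
        (fun t : ℝ => ∫ x, levyChar b σ2 lam r (t * g x)))) ∧
    iteratedDeriv n (fun t : ℝ => ∫ x, levyChar b σ2 lam r (t * g x)) 0 =
      Complex.I ^ n * (lam : ℂ) * ((∫ s : ℝ, s ^ n ∂r : ℝ) : ℂ) *
        ((∫ x, g x ^ n : ℝ) : ℂ) := by
  classical
  set c1 : ℂ := ((∫ x, g x : ℝ) : ℂ) with hc1
  set c2 : ℂ := ((∫ x, g x ^ 2 : ℝ) : ℂ) with hc2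
  set G : ℕ → ℝ → ℂ := fun k t => LevyAux.Pl b σ2 c1 c2 k t + lam * LevyAux.Phi g r k t
    with hGdef
  have hG : ∀ k t, HasDerivAt (G k) (G (k+1) t) t := fun k t =>
    (LevyAux.hasDerivAt_Pl b σ2 c1 c2 k t).add
      ((LevyAux.hasDerivAt_Phi' g r hmom k t).const_mul (lam : ℂ))
  have hF0 : (fun t : ℝ => ∫ x, levyChar b σ2 lam r (t * g x)) = G 0 := by
    funext t
    rw [LevyAux.decomp g r hmom b σ2 lam t]
    simp [hGdef, LevyAux.Pl, hc1, hc2]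
  have hIter : ∀ k,
      iteratedDeriv k (fun t : ℝ => ∫ x, levyChar b σ2 lam r (t * g x)) = G k := by
    intro k
    induction k with
    | zero => simpa [iteratedDeriv_zero] using hF0
    | succ k ih =>
      rw [iteratedDeriv_succ, ih]
      funext t
      exact (hG k t).deriv
  constructor
  · intro k _
    rw [hIter k]
    exact fun t => (hG k t).differentiableAt
  · rw [hIter n]
    have hn0 : n ≠ 0 := by omega
    have hn1 : n ≠ 1 := by omega
    have hn2 : n ≠ 2 := by omega
    show LevyAux.Pl b σ2 c1 c2 n 0 + lam * LevyAux.Phi g r n 0 = _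
    rw [LevyAux.Phi_at_zero g r n hn0]
    simp only [LevyAux.Pl, if_neg hn0, if_neg hn1, if_neg hn2, zero_add]
    ring
end

section
/- Let d ≥ 1, n ≥ 2, 1 ≤ p ≤ n − 1, let g_1, …, g_n be Schwartz functions on ℝ^d, and let a ∈ ℝ^d with a ≠ 0. Then lim_{t → ∞} ∫_{ℝ^d} ∏_{j=1}^p g_j(y) · ∏_{j=p+1}^n g_j(y − t·a) dy = 0. In particular, the truncated Schwinger functions S_n^T(f_1, …, f_p, τ_{ta} f_{p+1}, …, τ_{ta} f_n) of the convoluted generalized white noise model tend to zero as t → ∞ (the cluster property of the cumulants). -/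
open MeasureTheory Filter Topology

theorem cluster_property_of_cumulants
    (d n p : ℕ) (hd : 1 ≤ d) (hn : 2 ≤ n) (hp1 : 1 ≤ p) (hp2 : p ≤ n - 1)
    (g : Fin n → SchwartzMap (EuclideanSpace ℝ (Fin d)) ℂ)
    (a : EuclideanSpace ℝ (Fin d)) (ha : a ≠ 0) :
    Tendsto
      (fun t : ℝ => ∫ y : EuclideanSpace ℝ (Fin d),
        ∏ j : Fin n, g j (if (j : ℕ) < p then y else y - t • a))
      atTop (𝓝 0) := by
  have hnpos : 0 < n := by omega
  set j0 : Fin n := ⟨0, hnpos⟩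
  -- bound constant for each g j
  have hC : ∀ j : Fin n, ∀ x : EuclideanSpace ℝ (Fin d), ‖g j x‖ ≤ ‖(g j).toBoundedContinuousFunction‖ := by
    intro j x
    simpa using ((g j).toBoundedContinuousFunction).norm_coe_le_norm x
  set C : Fin n → ℝ := fun j => ‖(g j).toBoundedContinuousFunction‖
  have hC0 : ∀ j, 0 ≤ C j := fun j => norm_nonneg _
  set K : ℝ := ∏ j ∈ Finset.univ.erase j0, C j
  have hK0 : 0 ≤ K := Finset.prod_nonneg fun j _ => hC0 j
  have h0 : (0 : ℂ) = ∫ y : EuclideanSpace ℝ (Fin d), (0 : ℂ) := by simp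
  rw [show (0 : ℂ) = ∫ y : EuclideanSpace ℝ (Fin d), (0 : ℂ) by simp]
  apply tendsto_integral_filter_of_dominated_convergence
    (bound := fun y => ‖g j0 y‖ * K)
  · -- measurability
    filter_upwards with t
    apply Continuous.aestronglyMeasurable
    apply continuous_finset_prod
    intro j _
    by_cases hj : (j : ℕ) < p
    · simpa [hj] using (g j).continuous
    · simpa [hj] using (show Continuous fun x => g j (x - t • a) from
        (g j).continuous.comp (continuous_id.sub continuous_const))
  · -- bound
    filter_upwards with t
    filter_upwards with y
    rw [norm_prod]
    have hj0p : (j0 : ℕ) < p := hp1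
    rw [← Finset.prod_erase_mul _ _ (Finset.mem_univ j0)]
    simp only [hj0p, if_true]
    rw [mul_comm]
    apply mul_le_mul_of_nonneg_left _ (norm_nonneg _)
    apply Finset.prod_le_prod (fun j _ => norm_nonneg _)
    intro j _
    exact hC j _
  · -- integrability of bound
    exact ((g j0).integrable.norm).mul_const K
  · -- pointwise limit
    filter_upwards with y
    have hjn : p < n := by omega
    set j1 : Fin n := ⟨p, hjn⟩
    have hlim : Tendsto (fun t : ℝ => ∏ j : Fin n,
        g j (if (j : ℕ) < p then y else y - t • a)) atTop
        (𝓝 (∏ j : Fin n, (if (j : ℕ) < p then g j y else 0))) := by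
      apply tendsto_finset_prod
      intro j _
      by_cases hj : (j : ℕ) < p
      · simpa [hj] using tendsto_const_nhds
      · simp only [hj, if_false]
        have hcc : Tendsto (fun t : ℝ => y - t • a) atTop (cocompact (EuclideanSpace ℝ (Fin d))) := by
          apply tendsto_cocompact_of_tendsto_dist_comp_atTop (0 : EuclideanSpace ℝ (Fin d))
          simp only [dist_zero_right]
          apply tendsto_atTop_mono' _ (Filter.eventually_atTop.2 ⟨0, fun t ht => ?_⟩)
          · exact (tendsto_atTop_add_const_right _ (-‖y‖)
              ((tendsto_id.atTop_mul_const (norm_pos_iff.2 ha))))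
          · calc id t * ‖a‖ + -‖y‖ = ‖t • a‖ - ‖y‖ := by
                  rw [norm_smul, Real.norm_eq_abs, abs_of_nonneg ht]; simp [id]; ring
              _ ≤ ‖y - t • a‖ := by
                  rw [norm_sub_rev]
                  exact norm_sub_norm_le _ _
        exact (zero_at_infty (g j)).comp hcc
    have hz : (∏ j : Fin n, (if (j : ℕ) < p then g j y else 0)) = 0 := by
      apply Finset.prod_eq_zero (Finset.mem_univ j1)
      simp [j1]
    rwa [hz] at hlim
end
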